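/- Let Ω be a properly convex open domain in ℝPⁿ whose boundary is the union of a strictly convex smooth open hypersurface S and its complement, and let Ω' ⊆ Ω be an open subset whose boundary inside Ω is a strictly convex smooth hypersurface; then Ω' is convex, hence properly convex. -/
import Mathlib

open Metric

lemma seg_compact {E : Type*} [NormedAddCommGroup E] [NormedSpace ℝ E] (x y : E) :
    IsCompact (segment ℝ x y) := by
  rw [segment_eq_image']
  exact isCompact_Icc.image (by continuity)

lemma seg_closure_aux {E : Type*} [NormedAddCommGroup E] [NormedSpace ℝ E]
    {Ω Ω' : Set E} (hΩconv : Convex ℝ Ω) (hsub : Ω' ⊆ Ω) (h'open : IsOpen Ω')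
    (hloc : ∀ p ∈ closure Ω' ∩ Ω, ∃ U ∈ nhds p, Convex ℝ (Ω' ∩ U))
    {x y : E} (hx : x ∈ Ω') (hy : y ∈ Ω')
    (happrox : ∀ ε > 0, ∃ y', segment ℝ x y' ⊆ Ω' ∧ dist y' y < ε) :
    segment ℝ x y ⊆ Ω' := by
  set v := y - x with hv
  set f : ℝ → E := fun t => x + t • v with hf
  set S : Set ℝ := {t | t ∈ Set.Icc (0:ℝ) 1 ∧ ∀ r ∈ Set.Icc (0:ℝ) t, f r ∈ Ω'} with hS
  have h0 : (0:ℝ) ∈ S := by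
    refine ⟨⟨le_refl _, zero_le_one⟩, fun r hr => ?_⟩
    have : r = 0 := le_antisymm hr.2 hr.1
    simp [this, hf, hx]
  have hbdd : BddAbove S := ⟨1, fun t ht => ht.1.2⟩
  set s := sSup S with hs
  have hs0 : 0 ≤ s := le_csSup hbdd h0
  have hs1 : s ≤ 1 := csSup_le ⟨0, h0⟩ (fun t ht => ht.1.2)
  have hlt : ∀ r, 0 ≤ r → r < s → f r ∈ Ω' := by
    intro r hr0 hrs
    obtain ⟨t, htS, hrt⟩ := exists_lt_of_lt_csSup ⟨0, h0⟩ hrs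
    exact htS.2 r ⟨hr0, hrt.le⟩
  -- the point f t is in closure Ω' for any t ∈ [0,1]
  have hclmem : ∀ t, 0 ≤ t → t ≤ 1 → f t ∈ closure Ω' := by
    intro t ht0 ht1
    rw [Metric.mem_closure_iff]
    intro ε hε
    obtain ⟨y', hy'seg, hy'dist⟩ := happrox ε hε
    refine ⟨x + t • (y' - x), hy'seg ?_, ?_⟩
    · rw [segment_eq_image']
      exact ⟨t, ⟨ht0, ht1⟩, rfl⟩
    · have : f t - (x + t • (y' - x)) = t • (y - y') := by
        simp only [hf, hv]
        module
      rw [dist_eq_norm, this, norm_smul, Real.norm_eq_abs, abs_of_nonneg ht0]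
      calc t * ‖y - y'‖ ≤ 1 * ‖y - y'‖ := by
            apply mul_le_mul_of_nonneg_right ht1 (norm_nonneg _)
        _ = dist y' y := by rw [one_mul, dist_comm, dist_eq_norm]
        _ < ε := hy'dist
  have hseg_mem : ∀ t, 0 ≤ t → t ≤ 1 → f t ∈ Ω := by
    intro t ht0 ht1
    apply hΩconv.segment_subset (hsub hx) (hsub hy)
    rw [segment_eq_image']
    exact ⟨t, ⟨ht0, ht1⟩, rfl⟩
  have hseq : s = 1 := by
    by_contra hne
    have hslt : s < 1 := lt_of_le_of_ne hs1 hne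
    set p := f s with hp
    obtain ⟨U, hU, hUconv⟩ := hloc p ⟨hclmem s hs0 hs1, hseg_mem s hs0 hs1⟩
    obtain ⟨ε2, hε2, hball⟩ := Metric.mem_nhds_iff.mp hU
    set C := Ω' ∩ ball p ε2 with hC
    have hCconv : Convex ℝ C := by
      have : C = (Ω' ∩ U) ∩ ball p ε2 := by
        rw [hC, Set.inter_assoc]
        congr 1
        exact (Set.inter_eq_self_of_subset_right hball).symm
      rw [this]
      exact hUconv.inter (convex_ball p ε2)
    have hCopen : IsOpen C := h'open.inter isOpen_ball
    -- choose δ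
    have hδ : ∃ δ : ℝ, 0 ≤ δ ∧ δ ≤ s ∧ δ * ‖v‖ < ε2 ∧ f (s - δ) ∈ Ω' := by
      by_cases hfs : f s ∈ Ω'
      · exact ⟨0, le_refl _, hs0, by simpa using hε2, by simpa using hfs⟩
      · have hspos : 0 < s := by
          rcases lt_or_eq_of_le hs0 with h | h
          · exact h
          · exfalso; apply hfs; rw [← h]; simpa [hf] using hx
        refine ⟨min s (ε2 / (‖v‖ + 1) / 2), ?_, ?_, ?_, ?_⟩
        · positivity
        · exact min_le_left _ _
        · have h1 : min s (ε2 / (‖v‖ + 1) / 2) ≤ ε2 / (‖v‖ + 1) / 2 := min_le_right _ _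
          have h2 : (0:ℝ) < ‖v‖ + 1 := by positivity
          have h3 : ‖v‖ ≥ 0 := norm_nonneg _
          have h4 : ε2 / (‖v‖ + 1) / 2 * ‖v‖ < ε2 := by
            rw [div_div, div_mul_eq_mul_div, div_lt_iff₀ (by positivity)]
            nlinarith
          calc min s (ε2 / (‖v‖ + 1) / 2) * ‖v‖ ≤ ε2 / (‖v‖ + 1) / 2 * ‖v‖ :=
                mul_le_mul_of_nonneg_right h1 h3
            _ < ε2 := h4
        · apply hlt
          · simp only [sub_nonneg]; exact min_le_left _ _
          · have : 0 < min s (ε2 / (‖v‖ + 1) / 2) := by positivity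
            linarith
    obtain ⟨δ, hδ0, hδs, hδε, haΩ⟩ := hδ
    set a := f (s - δ) with ha
    have haball : a ∈ ball p ε2 := by
      rw [mem_ball, dist_eq_norm]
      have : a - p = (-δ) • v := by simp only [ha, hp, hf]; module
      rw [this, norm_smul, Real.norm_eq_abs, abs_neg, abs_of_nonneg hδ0]
      exact hδε
    have haC : a ∈ C := ⟨haΩ, haball⟩
    -- choose t1
    set t1 := min 1 (s + ε2 / (2 * (‖v‖ + 1))) with ht1
    have ht1s : s < t1 := by
      apply lt_min hslt
      have : 0 < ε2 / (2 * (‖v‖ + 1)) := by positivity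
      linarith
    have ht1le : t1 ≤ 1 := min_le_left _ _
    have ht1norm : (t1 - s) * ‖v‖ < ε2 := by
      have h1 : t1 - s ≤ ε2 / (2 * (‖v‖ + 1)) := by
        have := min_le_right 1 (s + ε2 / (2 * (‖v‖ + 1)))
        linarith
      have h2 : ε2 / (2 * (‖v‖ + 1)) * ‖v‖ < ε2 := by
        rw [div_mul_eq_mul_div, div_lt_iff₀ (by positivity)]
        nlinarith [norm_nonneg v]
      calc (t1 - s) * ‖v‖ ≤ ε2 / (2 * (‖v‖ + 1)) * ‖v‖ :=
            mul_le_mul_of_nonneg_right h1 (norm_nonneg _)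
        _ < ε2 := h2
    set q := f t1 with hq
    have hqball : q ∈ ball p ε2 := by
      rw [mem_ball, dist_eq_norm]
      have : q - p = (t1 - s) • v := by simp only [hq, hp, hf]; module
      rw [this, norm_smul, Real.norm_eq_abs, abs_of_nonneg (by linarith)]
      exact ht1norm
    have hqclC : q ∈ closure C := by
      have hqcl : q ∈ closure Ω' := hclmem t1 (by linarith) ht1le
      rw [_root_.mem_closure_iff]
      intro o ho hqo
      rw [_root_.mem_closure_iff] at hqcl
      obtain ⟨z, hz, hzΩ'⟩ := hqcl (o ∩ ball p ε2) (ho.inter isOpen_ball) ⟨hqo, hqball⟩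
      exact ⟨z, hz.1, hzΩ', hz.2⟩
    have hkey : ∀ r, s - δ < r → r < t1 → f r ∈ C := by
      intro r hr1 hr2
      have hsub2 : openSegment ℝ a q ⊆ interior C :=
        hCconv.openSegment_interior_closure_subset_interior
          (by rwa [hCopen.interior_eq]) hqclC
      have hmem : f r ∈ openSegment ℝ a q := by
        rw [openSegment_eq_image']
        have hden : 0 < t1 - (s - δ) := by linarith
        set θ := (r - (s - δ)) / (t1 - (s - δ)) with hθdef
        refine ⟨θ, ⟨div_pos (by linarith) hden, ?_⟩, ?_⟩
        · rw [hθdef, div_lt_one hden]; linarith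
        · show a + θ • (q - a) = f r
          have hqa : q - a = (t1 - (s - δ)) • v := by simp only [hq, ha, hf]; module
          have hθr : θ * (t1 - (s - δ)) = r - (s - δ) := by
            rw [hθdef]; field_simp
          rw [hqa, smul_smul, hθr]
          simp only [ha, hf]
          module
      have := hsub2 hmem
      rwa [hCopen.interior_eq] at this
    set t' := (s + t1) / 2 with ht'
    have ht'S : t' ∈ S := by
      refine ⟨⟨by linarith, by linarith⟩, fun r hr => ?_⟩
      by_cases hcase : s - δ < r
      · exact (hkey r hcase (by cases hr; linarith)).1
      · push_neg at hcase
        rcases lt_or_eq_of_le hcase with h | h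
        · exact hlt r hr.1 (by linarith)
        · rw [h]; exact haΩ
    have h2 := le_csSup hbdd ht'S
    rw [← hs] at h2
    linarith
  -- conclude
  intro z hz
  rw [segment_eq_image'] at hz
  obtain ⟨r, ⟨hr0, hr1⟩, rfl⟩ := hz
  rcases lt_or_eq_of_le hr1 with h | h
  · exact hlt r hr0 (by rw [hseq]; exact h)
  · rw [h]; simpa [hf] using hy

theorem strictly_convex_boundary_implies_properly_convex
    {n : ℕ} (Ω Ω' : Set (EuclideanSpace ℝ (Fin n)))
    (hΩopen : IsOpen Ω) (hΩconv : Convex ℝ Ω) (hΩbdd : Bornology.IsBounded Ω)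
    (hsub : Ω' ⊆ Ω) (h'open : IsOpen Ω') (h'conn : IsConnected Ω')
    (hlocconv : ∀ x ∈ frontier Ω' ∩ Ω, ∃ U ∈ nhds x, Convex ℝ (Ω' ∩ U))
    (hlocconv' : ∀ x ∈ Ω', ∃ U ∈ nhds x, Convex ℝ (Ω' ∩ U)) :
    Convex ℝ Ω' ∧ Bornology.IsBounded Ω' := by
  have hloc : ∀ p ∈ closure Ω' ∩ Ω, ∃ U ∈ nhds p, Convex ℝ (Ω' ∩ U) := by
    intro p ⟨hpcl, hpΩ⟩
    by_cases hp : p ∈ Ω'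
    · exact hlocconv' p hp
    · apply hlocconv p
      refine ⟨⟨hpcl, ?_⟩, hpΩ⟩
      rwa [h'open.interior_eq]
  refine ⟨?_, hΩbdd.subset hsub⟩
  rw [convex_iff_segment_subset]
  intro x hx y hy
  set A : Set (EuclideanSpace ℝ (Fin n)) := {z | segment ℝ x z ⊆ Ω'} with hA
  have hAopen : IsOpen A := by
    rw [Metric.isOpen_iff]
    intro z hz
    obtain ⟨δ, hδpos, hδsub⟩ :=
      (seg_compact x z).exists_thickening_subset_open h'open hz
    refine ⟨δ, hδpos, fun y' hy' => ?_⟩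
    intro w hw
    rw [segment_eq_image'] at hw
    obtain ⟨t, ⟨ht0, ht1⟩, rfl⟩ := hw
    apply hδsub
    rw [Metric.mem_thickening_iff]
    refine ⟨x + t • (z - x), ?_, ?_⟩
    · rw [segment_eq_image']; exact ⟨t, ⟨ht0, ht1⟩, rfl⟩
    · have : x + t • (y' - x) - (x + t • (z - x)) = t • (y' - z) := by module
      rw [dist_eq_norm, this, norm_smul, Real.norm_eq_abs, abs_of_nonneg ht0]
      calc t * ‖y' - z‖ ≤ 1 * ‖y' - z‖ :=
            mul_le_mul_of_nonneg_right ht1 (norm_nonneg _)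
        _ = dist y' z := by rw [one_mul, dist_eq_norm]
        _ < δ := mem_ball.mp hy'
  have hclosureA : ∀ z ∈ Ω', z ∈ closure A → z ∈ A := by
    intro z hzΩ' hzcl
    apply seg_closure_aux hΩconv hsub h'open hloc hx hzΩ'
    intro ε hε
    rw [Metric.mem_closure_iff] at hzcl
    obtain ⟨b, hbA, hbdist⟩ := hzcl ε hε
    exact ⟨b, hbA, by rwa [dist_comm]⟩
  by_contra hyA
  have hxA : x ∈ A := by
    intro w hw
    rw [segment_same] at hw
    rw [hw]
    exact hx
  have hyB : y ∈ (closure A)ᶜ := fun h => hyA (hclosureA y hy h)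
  have hcover : Ω' ⊆ A ∪ (closure A)ᶜ := by
    intro z hz
    by_cases h : z ∈ closure A
    · exact Or.inl (hclosureA z hz h)
    · exact Or.inr h
  obtain ⟨w, _, hwA, hwB⟩ := h'conn.isPreconnected A (closure A)ᶜ hAopen
    isClosed_closure.isOpen_compl hcover ⟨x, hx, hxA⟩ ⟨y, hy, hyB⟩
  exact hwB (subset_closure hwA)
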